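/- Suppose f_{α,γ}(λ,∂) ∈ ℂ[λ,∂] (α, γ ∈ Δ) satisfies the intermediate-series equation, every f_{α,γ} is nonzero, and q_γ, m_γ ∈ ℂ are the constants with f_{0,γ}(λ,∂) = b(∂ + q_γλ + m_γ). Then m_{β+γ} = m_γ − φ(β)/b for all β, γ ∈ Δ; consequently, with c := m_0, one has m_β = c − φ(β)/b for all β ∈ Δ. -/

import Mathlib

/-- Evaluation of a two-variable polynomial `P(λ,∂) ∈ ℂ[λ,∂]` at `λ = l`, `∂ = d`. -/
noncomputable def ev2 (P : MvPolynomial (Fin 2) ℂ) (l d : ℂ) : ℂ :=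
  MvPolynomial.eval ![l, d] P

/-- `B(α,β) = (1/b)(φ(α)β − φ(β)α + b(φ(α) − φ(β)))`. -/
noncomputable def Bc (b : ℂ) {Δ : AddSubgroup ℂ} (φ : Δ →+ ℂ) (α β : Δ) : ℂ :=
  (1 / b) * (φ α * (β : ℂ) - φ β * (α : ℂ) + b * (φ α - φ β))

/-- The intermediate-series equation for a family `f_{α,γ}(λ,∂) ∈ ℂ[λ,∂]`:
`((β+b)λ − (α+b)μ + B(α,β)) f_{α+β,γ}(λ+μ,∂)
  = f_{β,γ}(μ,λ+∂) f_{α,β+γ}(λ,∂) − f_{α,γ}(λ,μ+∂) f_{β,α+γ}(μ,∂)`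
for all `α, β, γ ∈ Δ` (an identity in `ℂ[λ,μ,∂]`, stated via evaluation at all complex
points `l, m, d`).  Equivalently, `V = ⊕_{γ∈Δ} ℂ[∂]M_γ` with
`x_α λ M_γ = f_{α,γ}(λ,∂) M_{α+γ}` is a free intermediate series module over
`CL(b,φ)`. -/
def ISE (Δ : AddSubgroup ℂ) (b : ℂ) (φ : Δ →+ ℂ)
    (f : Δ → Δ → MvPolynomial (Fin 2) ℂ) : Prop :=
  ∀ α β γ : Δ, ∀ l m d : ℂ,
    (((β : ℂ) + b) * l - ((α : ℂ) + b) * m + Bc b φ α β)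
        * ev2 (f (α + β) γ) (l + m) d
      = ev2 (f β γ) m (l + d) * ev2 (f α (β + γ)) l d
        - ev2 (f α γ) l (m + d) * ev2 (f β (α + γ)) m d

/-- With all members nonzero and `f_{0,γ}(λ,∂) = b(∂ + q_γλ + m_γ)`,
one has `m_{β+γ} = m_γ − φ(β)/b` for all `β, γ`, hence `m_β = m_0 − φ(β)/b`. -/
theorem stmt12 (Δ : AddSubgroup ℂ) (hΔinf : (Δ : Set ℂ).Infinite)
    (b : ℂ) (hb : 2 * b ∉ Δ) (φ : Δ →+ ℂ)
    (f : Δ → Δ → MvPolynomial (Fin 2) ℂ) (hf : ISE Δ b φ f)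
    (hnz : ∀ α γ : Δ, f α γ ≠ 0)
    (q m : Δ → ℂ)
    (h0 : ∀ γ : Δ, ∀ l d : ℂ, ev2 (f 0 γ) l d = b * (d + q γ * l + m γ)) :
    (∀ β γ : Δ, m (β + γ) = m γ - φ β / b) ∧
    (∀ β : Δ, m β = m 0 - φ β / b) := by
  have hb0 : b ≠ 0 := by
    rintro rfl
    exact hb (by simpa using Δ.zero_mem)
  have main : ∀ β γ : Δ, m (β + γ) = m γ - φ β / b := by
    intro β γ
    -- find a point where f β γ is nonzero
    have hex : ∃ x : Fin 2 → ℂ, MvPolynomial.eval x (f β γ) ≠ 0 := by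
      by_contra h
      push_neg at h
      exact hnz β γ (MvPolynomial.funext fun x => by simp [h x])
    obtain ⟨x, hx⟩ := hex
    have hxeta : (![x 0, x 1] : Fin 2 → ℂ) = x := by
      funext i
      fin_cases i <;> rfl
    have hE : ev2 (f β γ) (x 0) (x 1) ≠ 0 := by
      simpa [ev2, hxeta] using hx
    have h := hf 0 β γ 0 (x 0) (x 1)
    have hB : Bc b φ 0 β = -(φ β) := by
      unfold Bc
      simp only [map_zero, AddSubgroup.coe_zero, ZeroMemClass.coe_zero, zero_mul, mul_zero, sub_zero,
        zero_sub, zero_add]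
      rw [one_div, ← mul_assoc, inv_mul_cancel₀ hb0, one_mul]
    rw [hB] at h
    simp only [zero_add, AddSubgroup.coe_zero, h0] at h
    -- h : (-(b * x 0) + -(φ β)) * ev2 (f β γ) (x 0) (x 1) = ...
    have key : b * m (β + γ) = b * m γ - φ β := by
      apply mul_left_cancel₀ hE
      linear_combination -h
    field_simp
    linear_combination key
  refine ⟨main, fun β => ?_⟩
  simpa using main β 0
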